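/- arXiv:math/9702213 — 2 statements merged into one kernel-verified Lean document; each statement's English description precedes it below -/
import Mathlib

section
/- Let J be a closed subspace of a Banach space X satisfying the averaged 3-ball property (A). Then for every x in the closed unit ball of X with dist(x, J) ≥ 1 − ε, every y_1, y_2, y_3 in the closed unit ball of J and every ε > 0, there exists y ∈ J such that ‖x + y_i − y‖ ≤ 1 + 3ε for i = 1, 2, 3. -/
open Filter Topology

noncomputable section

/-- The averaged 3-ball property (A) for a subspace `J` of `X`. -/
def AvgThreeBall {X : Type*} [NormedAddCommGroup X] [NormedSpace ℝ X]
    (J : Submodule ℝ X) : Prop :=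
  ∀ y₁ y₂ y₃ x : X, y₁ ∈ J → y₂ ∈ J → y₃ ∈ J →
    ‖y₁‖ ≤ 1 → ‖y₂‖ ≤ 1 → ‖y₃‖ ≤ 1 → ‖x‖ ≤ 1 →
    ∀ ε : ℝ, 0 < ε → ∃ y ∈ J,
      ‖x + y₁ - y‖ + ‖x - y₁ - y‖ ≤ 2 * (1 + ε) ∧
      ‖x + y₂ - y‖ + ‖x - y₂ - y‖ ≤ 2 * (1 + ε) ∧
      ‖x + y₃ - y‖ + ‖x - y₃ - y‖ ≤ 2 * (1 + ε)

lemma avg_aux {X : Type*} [NormedAddCommGroup X] [NormedSpace ℝ X]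
    (J : Submodule ℝ X) {ε : ℝ} {x yᵢ y : X} (hᵢ : yᵢ ∈ J) (hy : y ∈ J)
    (hdist : 1 - ε ≤ Metric.infDist x (J : Set X))
    (H : ‖x + yᵢ - y‖ + ‖x - yᵢ - y‖ ≤ 2 * (1 + ε)) :
    ‖x + yᵢ - y‖ ≤ 1 + 3 * ε := by
  have h1 : Metric.infDist x (J : Set X) ≤ dist x (yᵢ + y) :=
    Metric.infDist_le_dist_of_mem (J.add_mem hᵢ hy)
  rw [dist_eq_norm, sub_add_eq_sub_sub] at h1
  linarith

/-- If a closed subspace `J` satisfies (A), then for every `x` in the unit ball with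
`dist(x, J) ≥ 1 − ε` one gets the conclusion of the 3-ball property with `1 + 3ε`. -/
theorem threeBall_of_avgThreeBall_of_dist
    (X : Type*) [NormedAddCommGroup X] [NormedSpace ℝ X] [CompleteSpace X]
    (J : Submodule ℝ X) (hJ : IsClosed (J : Set X)) (hA : AvgThreeBall J) :
    ∀ ε : ℝ, 0 < ε → ∀ x : X, ‖x‖ ≤ 1 → 1 - ε ≤ Metric.infDist x (J : Set X) →
    ∀ y₁ y₂ y₃ : X, y₁ ∈ J → y₂ ∈ J → y₃ ∈ J → ‖y₁‖ ≤ 1 → ‖y₂‖ ≤ 1 → ‖y₃‖ ≤ 1 →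
    ∃ y ∈ J, ‖x + y₁ - y‖ ≤ 1 + 3 * ε ∧ ‖x + y₂ - y‖ ≤ 1 + 3 * ε ∧
      ‖x + y₃ - y‖ ≤ 1 + 3 * ε := by
  intro ε hε x hx hdist y₁ y₂ y₃ h₁ h₂ h₃ n₁ n₂ n₃
  obtain ⟨y, hy, H₁, H₂, H₃⟩ := hA y₁ y₂ y₃ x h₁ h₂ h₃ n₁ n₂ n₃ hx ε hε
  exact ⟨y, hy, avg_aux J h₁ hy hdist H₁, avg_aux J h₂ hy hdist H₂,
    avg_aux J h₃ hy hdist H₃⟩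
end
end

section
/- Let J be a closed subspace of a Banach space X satisfying the 6-ball property: for all z_1, …, z_6 in the closed unit ball of J, all x in the closed unit ball of X and all ε > 0 there is y ∈ J with ‖x + z_i − y‖ ≤ 1 + ε for i = 1, …, 6. Then J satisfies the averaged 3-ball property (A). -/
open Filter Topology

noncomputable section

/-- The 6-ball property for a subspace `J` of `X`. -/
def SixBall {X : Type*} [NormedAddCommGroup X] [NormedSpace ℝ X]
    (J : Submodule ℝ X) : Prop :=
  ∀ z : Fin 6 → X, (∀ i, z i ∈ J) → (∀ i, ‖z i‖ ≤ 1) →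
    ∀ x : X, ‖x‖ ≤ 1 → ∀ ε : ℝ, 0 < ε → ∃ y ∈ J, ∀ i, ‖x + z i - y‖ ≤ 1 + ε

/-- The 6-ball property implies the averaged 3-ball property (A). -/
theorem avgThreeBall_of_sixBall
    (X : Type*) [NormedAddCommGroup X] [NormedSpace ℝ X] [CompleteSpace X]
    (J : Submodule ℝ X) (hJ : IsClosed (J : Set X)) (h6 : SixBall J) :
    AvgThreeBall J := by
  intro y₁ y₂ y₃ x hy₁ hy₂ hy₃ hn₁ hn₂ hn₃ hx ε hε
  obtain ⟨y, hyJ, hy⟩ := h6 ![y₁, -y₁, y₂, -y₂, y₃, -y₃]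
    (by intro i; fin_cases i <;>
      first
      | exact hy₁ | exact hy₂ | exact hy₃
      | exact J.neg_mem hy₁ | exact J.neg_mem hy₂ | exact J.neg_mem hy₃)
    (by intro i; fin_cases i <;> first | exact (show ‖-y₃‖ ≤ 1 by rwa [norm_neg]) | simpa using hn₁ | simpa using hn₂ | simpa using hn₃)
    x hx ε hε
  refine ⟨y, hyJ, ?_, ?_, ?_⟩
  · have h1 : ‖x + y₁ - y‖ ≤ 1 + ε := hy 0
    have h2 : ‖x + -y₁ - y‖ ≤ 1 + ε := hy 1
    rw [show x + -y₁ - y = x - y₁ - y by abel] at h2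
    linarith
  · have h1 : ‖x + y₂ - y‖ ≤ 1 + ε := hy 2
    have h2 : ‖x + -y₂ - y‖ ≤ 1 + ε := hy 3
    rw [show x + -y₂ - y = x - y₂ - y by abel] at h2
    linarith
  · have h1 : ‖x + y₃ - y‖ ≤ 1 + ε := hy 4
    have h2 : ‖x + -y₃ - y‖ ≤ 1 + ε := hy 5
    rw [show x + -y₃ - y = x - y₃ - y by abel] at h2
    linarith
end
end
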